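/- arXiv:2510.00750 — 5 statements merged into one kernel-verified Lean document; each statement's English description precedes it below -/
import Mathlib

section
/- Let V be a vector space over ℚ, let Λ ⊆ V be an additive subgroup, and let V₁ ⊆ V₂ ⊆ V₃ ⊆ ⋯ be an increasing chain of finite-dimensional ℚ-subspaces of V whose union is V. If for every i the group Λ ∩ Vᵢ is a free abelian group, then Λ is a free abelian group. -/
section Aux

variable {V : Type*} [AddCommGroup V] [Module ℚ V]

/-- key inductive disjointness -/
theorem stmt7_aux_key {L : Type*} [AddCommGroup L] [Module ℤ L]
    (M D : ℕ → Submodule ℤ L)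
    (hMmono : Monotone M)
    (hDle : ∀ n, D n ≤ M n)
    (hDdisj : ∀ n, Disjoint (D (n + 1)) (M n)) :
    ∀ n i, Disjoint (D i)
      ((Finset.range n).sup (fun j => if j = i then (⊥ : Submodule ℤ L) else D j)) := by
  have htle : ∀ n i, (Finset.range (n+1)).sup
      (fun j => if j = i then (⊥ : Submodule ℤ L) else D j) ≤ M n := by
    intro n i
    apply Finset.sup_le
    intro j hj
    rw [Finset.mem_range] at hj
    split
    · exact bot_le
    · exact (hDle j).trans (hMmono (Nat.lt_succ_iff.mp hj))
  intro n
  induction n with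
  | zero => intro i; simp
  | succ m ih =>
    intro i
    rw [Finset.range_add_one, Finset.sup_insert]
    rcases eq_or_ne m i with rfl | hmi
    · have hb : (if m = m then (⊥ : Submodule ℤ L) else D m) = ⊥ := if_pos rfl
      rw [hb, bot_sup_eq]
      exact ih m
    · rw [if_neg hmi]
      rw [Submodule.disjoint_def]
      intro x hxi hxsup
      rcases Submodule.mem_sup.mp hxsup with ⟨z, hz, y, hy, hxy⟩
      cases m with
      | zero =>
        simp only [Finset.range_zero, Finset.sup_empty, Submodule.mem_bot] at hy
        subst hy
        rw [add_zero] at hxy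
        rcases Nat.exists_eq_succ_of_ne_zero (Ne.symm hmi) with ⟨k, rfl⟩
        exact (Submodule.disjoint_def.mp (hDdisj k)) x hxi
          (hMmono (Nat.zero_le k) (hDle 0 (hxy ▸ hz)))
      | succ p =>
        rcases Nat.lt_or_ge i (p + 1) with him | him
        · -- i ≤ p : kill z then use IH
          have hyMp : y ∈ M p := htle p i hy
          have hxMp : x ∈ M p := hMmono (Nat.lt_succ_iff.mp him) (hDle i hxi)
          have hzMp : z ∈ M p := by
            have hzxy : z = x - y := by rw [← hxy]; abel
            rw [hzxy]; exact Submodule.sub_mem _ hxMp hyMp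
          have hz0 : z = 0 := (Submodule.disjoint_def.mp (hDdisj p)) z hz hzMp
          rw [hz0, zero_add] at hxy
          exact (Submodule.disjoint_def.mp (ih i)) x hxi (hxy ▸ hy)
        · -- i ≥ p + 1, i ≠ p + 1 so i ≥ p + 2
          have him' : p + 1 < i := lt_of_le_of_ne him hmi
          rcases Nat.exists_eq_succ_of_ne_zero (by omega : i ≠ 0) with ⟨k, rfl⟩
          have hk : p + 1 ≤ k := by omega
          have hxM : x ∈ M k := by
            apply hMmono hk
            have hzM : z ∈ M (p + 1) := hDle (p + 1) hz
            have hyM : y ∈ M (p + 1) := hMmono (Nat.le_succ p) (htle p (k + 1) hy)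
            rw [← hxy]; exact Submodule.add_mem _ hzM hyM
          exact (Submodule.disjoint_def.mp (hDdisj k)) x hxi hxM

end Aux

/-- Let `V` be a `ℚ`-vector space, `Λ ⊆ V` an additive subgroup, and `V₁ ⊆ V₂ ⊆ ⋯` an
increasing chain of finite-dimensional subspaces with union `V`.  If `Λ ∩ Vᵢ` is free abelian
for every `i`, then `Λ` is free abelian. -/
theorem stmt7 {V : Type*} [AddCommGroup V] [Module ℚ V]
    (Λ : AddSubgroup V) (Vs : ℕ → Submodule ℚ V)
    (hmono : Monotone Vs)
    (hfd : ∀ i : ℕ, FiniteDimensional ℚ (Vs i))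
    (hunion : ∀ v : V, ∃ i : ℕ, v ∈ Vs i)
    (hfree : ∀ i : ℕ, Module.Free ℤ ↥(Λ ⊓ (Vs i).toAddSubgroup)) :
    Module.Free ℤ ↥Λ := by
  classical
  set L : Submodule ℤ V := AddSubgroup.toIntSubmodule Λ with hL
  -- the intersections, as submodules of L
  set M : ℕ → Submodule ℤ ↥L :=
    fun i => Submodule.comap L.subtype ((Vs i).restrictScalars ℤ) with hM
  have hMmono : Monotone M := fun i j hij =>
    Submodule.comap_mono (fun x hx => hmono hij hx)
  have hMtop : ∀ x : ↥L, ∃ i, x ∈ M i := fun x => hunion (x : V)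
  -- freeness of each M i
  have efree : ∀ i, Module.Free ℤ ↥(M i) := by
    intro i
    have := hfree i
    let e : ↥(Λ ⊓ (Vs i).toAddSubgroup) ≃ₗ[ℤ] ↥(M i) :=
      { toFun := fun y => ⟨⟨(y : V), (AddSubgroup.mem_inf.mp y.2).1⟩,
          (AddSubgroup.mem_inf.mp y.2).2⟩
        invFun := fun x => ⟨((x : ↥L) : V), AddSubgroup.mem_inf.mpr ⟨(x : ↥L).2, x.2⟩⟩
        left_inv := fun y => rfl
        right_inv := fun x => rfl
        map_add' := fun a b => rfl
        map_smul' := fun c a => rfl }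
    exact Module.Free.of_equiv e
  -- finiteness of each M i
  have hfin : ∀ i, Module.Finite ℤ ↥(M i) := by
    intro i
    have : Module.Free ℤ ↥(M i) := efree i
    obtain ⟨⟨κ, b⟩⟩ := this
    let f : ↥(M i) →ₗ[ℤ] ↥(Vs i) :=
      { toFun := fun x => ⟨((x : ↥L) : V), x.2⟩
        map_add' := fun a b => rfl
        map_smul' := fun c a => rfl }
    have hfinj : Function.Injective f := by
      intro a b hab
      have h1 := Subtype.ext_iff.mp hab
      exact Subtype.ext (Subtype.ext h1)
    have hw : LinearIndependent ℤ (f ∘ b) :=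
      b.linearIndependent.map' f (LinearMap.ker_eq_bot.mpr hfinj)
    have hwQ : LinearIndependent ℚ (f ∘ b) :=
      (LinearIndependent.iff_fractionRing ℤ ℚ).mp hw
    have : FiniteDimensional ℚ (Vs i) := hfd i
    have : Finite κ := hwQ.finite
    exact Module.Finite.of_basis b
  -- step: complement existence
  have step : ∀ i, ∃ C : Submodule ℤ ↥L,
      Disjoint C (M i) ∧ C ⊔ M i = M (i + 1) ∧ Module.Free ℤ ↥C := by
    intro i
    haveI := hfin (i + 1)
    set N : Submodule ℤ ↥(M (i + 1)) := Submodule.comap (M (i + 1)).subtype (M i) with hN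
    haveI : NoZeroSMulDivisors ℤ (↥(M (i + 1)) ⧸ N) := by
      refine ⟨fun {c x} hcx => ?_⟩
      rcases eq_or_ne c 0 with rfl | hc
      · exact Or.inl rfl
      · right
        obtain ⟨x', rfl⟩ := N.mkQ_surjective x
        have hmem : c • x' ∈ N := by
          rwa [← Submodule.Quotient.mk_eq_zero, ← Submodule.mkQ_apply, LinearMap.map_smul]
        rw [Submodule.mkQ_apply, Submodule.Quotient.mk_eq_zero]
        -- hmem : c • x' ∈ N
        have hcv : c • (((x' : ↥(M (i+1))) : ↥L) : V) ∈ Vs i := by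
          exact hmem
        have : (((x' : ↥(M (i+1))) : ↥L) : V) ∈ Vs i := by
          have h2 : ((c : ℚ)⁻¹ • (c • (((x' : ↥(M (i+1))) : ↥L) : V))) ∈ Vs i :=
            Submodule.smul_mem _ _ hcv
          rwa [← Int.cast_smul_eq_zsmul ℚ c, smul_smul,
            inv_mul_cancel₀ (by exact_mod_cast hc), one_smul] at h2
        exact this
    haveI : Module.Free ℤ (↥(M (i + 1)) ⧸ N) := Module.free_of_finite_type_torsion_free'
    obtain ⟨s, hs⟩ := N.mkQ.exists_rightInverse_of_surjective
      (LinearMap.range_eq_top.mpr N.mkQ_surjective)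
    have hsec : ∀ q, N.mkQ (s q) = q := fun q => by
      have := LinearMap.congr_fun hs q; simpa using this
    refine ⟨LinearMap.range ((M (i + 1)).subtype ∘ₗ s), ?_, ?_, ?_⟩
    · -- disjoint
      rw [Submodule.disjoint_def]
      rintro x ⟨q, rfl⟩ hxMi
      have hsq : s q ∈ N := hxMi
      have hq0 : q = 0 := by
        have h0 : N.mkQ (s q) = 0 := by
          rw [Submodule.mkQ_apply, Submodule.Quotient.mk_eq_zero]; exact hsq
        exact (hsec q).symm.trans h0
      simp [hq0]
    · -- sup
      apply le_antisymm
      · apply sup_le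
        · rintro x ⟨q, rfl⟩
          exact (s q).2
        · exact hMmono (Nat.le_succ i)
      · intro x hx
        set x' : ↥(M (i + 1)) := ⟨x, hx⟩ with hx'
        have hdiff : x' - s (N.mkQ x') ∈ N := by
          rw [← Submodule.Quotient.mk_eq_zero, ← Submodule.mkQ_apply, map_sub, hsec]
          simp
        refine Submodule.mem_sup.mpr ⟨((M (i+1)).subtype (s (N.mkQ x'))), ⟨_, rfl⟩,
          ((M (i+1)).subtype (x' - s (N.mkQ x'))), hdiff, ?_⟩
        simp [x']
    · -- free
      have hinj : Function.Injective ((M (i + 1)).subtype ∘ₗ s) := by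
        intro a b hab
        have hsab : s a = s b := Subtype.ext hab
        rw [← hsec a, ← hsec b, hsab]
      exact Module.Free.of_equiv (LinearEquiv.ofInjective _ hinj)
  choose C hC1 hC2 hC3 using step
  set D : ℕ → Submodule ℤ ↥L := fun n => Nat.casesOn n (M 0) C with hD
  have hDle : ∀ n, D n ≤ M n := by
    intro n
    cases n with
    | zero => exact le_refl _
    | succ i => exact le_trans le_sup_left (le_of_eq (hC2 i))
  have hDdisj : ∀ n, Disjoint (D (n + 1)) (M n) := fun n => hC1 n
  have hDfree : ∀ n, Module.Free ℤ ↥(D n) := by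
    intro n
    cases n with
    | zero => exact efree 0
    | succ i => exact hC3 i
  have hDsup : ∀ n, (Finset.range (n + 1)).sup D = M n := by
    intro n
    induction n with
    | zero => simp [D]
    | succ m ih =>
      rw [Finset.range_add_one, Finset.sup_insert, ih]
      rw [← hC2 m]
  -- total sup
  have hsup_top : ⨆ n, D n = ⊤ := by
    rw [eq_top_iff]
    intro x _
    obtain ⟨i, hi⟩ := hMtop x
    have : x ∈ (Finset.range (i + 1)).sup D := by rw [hDsup]; exact hi
    have hle : (Finset.range (i + 1)).sup D ≤ ⨆ n, D n :=
      Finset.sup_le (fun j _ => le_iSup D j)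
    exact hle this
  -- independence
  have hkey := stmt7_aux_key M D hMmono hDle hDdisj
  have hindep : iSupIndep D := by
    intro i
    rw [Submodule.disjoint_def]
    intro x hxi hxsup
    have hxsup' : x ∈ ⨆ j, (if j = i then (⊥ : Submodule ℤ ↥L) else D j) := by
      have : (⨆ (j) (_ : j ≠ i), D j) ≤ ⨆ j, (if j = i then (⊥ : Submodule ℤ ↥L) else D j) := by
        apply iSup_le; intro j
        apply iSup_le; intro hji
        refine le_trans (le_of_eq ?_)
          (le_iSup (fun j => if j = i then (⊥ : Submodule ℤ ↥L) else D j) j)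
        simp [hji]
      exact this hxsup
    obtain ⟨t, ht⟩ := Submodule.mem_iSup_iff_exists_finset.mp hxsup'
    set n := (t.sup id) + i + 1 with hn
    have hle : (⨆ j ∈ t, (if j = i then (⊥ : Submodule ℤ ↥L) else D j)) ≤
        (Finset.range n).sup (fun j => if j = i then (⊥ : Submodule ℤ ↥L) else D j) := by
      apply iSup_le; intro j
      apply iSup_le; intro hjt
      have hjn : j < n := by
        have : j ≤ t.sup id := Finset.le_sup (f := id) hjt
        omega
      exact Finset.le_sup (f := fun j => if j = i then (⊥ : Submodule ℤ ↥L) else D j)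
        (Finset.mem_range.mpr hjn)
    exact (Submodule.disjoint_def.mp (hkey n i)) x hxi (hle ht)
  have hinternal : DirectSum.IsInternal D :=
    (DirectSum.isInternal_submodule_iff_iSupIndep_and_iSup_eq_top D).mpr ⟨hindep, hsup_top⟩
  haveI : ∀ n, Module.Free ℤ ↥(D n) := hDfree
  have hLfree : Module.Free ℤ ↥L :=
    Module.Free.of_equiv (LinearEquiv.ofBijective (DirectSum.coeLinearMap D) hinternal)
  -- transfer to ↥Λ
  let e : ↥L ≃ₗ[ℤ] ↥Λ :=
    { toFun := fun x => ⟨(x : V), x.2⟩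
      invFun := fun y => ⟨(y : V), y.2⟩
      left_inv := fun x => rfl
      right_inv := fun y => rfl
      map_add' := fun a b => rfl
      map_smul' := fun c a => rfl }
  exact Module.Free.of_equiv e
end

section
/- Let L be a field of characteristic zero such that the quotient group L^×/(L^×)² is finite, and let c₀, c₁, c₂, c₃ be four distinct elements of L; set f(u) = (u+c₀)(u+c₁)(u+c₂)(u+c₃). Then there exist a positive integer n and pairs (a₁,b₁),…,(aₙ,bₙ) with aᵢ ∈ L^× and bᵢ ∈ L, such that for all but finitely many t₀ ∈ L there exists an index i with f(aᵢ t₀ + bᵢ) a square in L. -/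
open Filter Set

/-- Let `L` be a field of characteristic zero such that `Lˣ/(Lˣ)²` is finite, and let
`c₀, c₁, c₂, c₃` be four distinct elements of `L`; set
`f(u) = (u+c₀)(u+c₁)(u+c₂)(u+c₃)`.  Then there are finitely many nonconstant linear functions
`aᵢ t + bᵢ` such that for all but finitely many `t₀ ∈ L`, some `f(aᵢ t₀ + bᵢ)` is a square
in `L`. -/
theorem stmt14 {L : Type*} [Field L] [CharZero L]
    (hfin : Finite (Lˣ ⧸ (powMonoidHom 2 : Lˣ →* Lˣ).range))
    (c : Fin 4 → L) (hc : Function.Injective c) :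
    ∃ n : ℕ, 0 < n ∧ ∃ a b : Fin n → L, (∀ i, a i ≠ 0) ∧
      {t₀ : L | ¬ ∃ i : Fin n, IsSquare (∏ j : Fin 4, (a i * t₀ + b i + c j))}.Finite := by
  classical
  by_contra hcon
  push_neg at hcon
  -- hcon : ∀ n, 0 < n → ∀ a b, (∀ i, a i ≠ 0) → ¬ Set.Finite {...}
  set N := (powMonoidHom 2 : Lˣ →* Lˣ).range with hN
  let cl : Lˣ →* Lˣ ⧸ N := QuotientGroup.mk' N
  -- the coloring associated with a point `t` : the square class of `t + d`
  let φ : L → L → Lˣ ⧸ N := fun d t =>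
    if h : t + d = 0 then 1 else cl (Units.mk0 (t + d) h)
  -- bad sets
  let Bf : L × L → Set L :=
    fun p => {t | ¬ IsSquare (∏ j : Fin 4, (p.1 * t + p.2 + c j))}
  -- every finite intersection of bad sets (with nonzero leading coefficients) is infinite
  have key : ∀ fs : Finset (L × L), (∀ p ∈ fs, p.1 ≠ 0) →
      (⋂ p ∈ fs, Bf p).Infinite := by
    intro fs hfs
    rcases fs.eq_empty_or_nonempty with rfl | hne
    · simpa using Set.infinite_univ (α := L)
    · have hn : 0 < fs.card := Finset.card_pos.2 hne
      have e := fs.equivFin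
      have hinf : ¬ ({t₀ : L | ∀ i : Fin fs.card,
          ¬ IsSquare (∏ j : Fin 4, ((((e.symm i : fs) : L × L).1) * t₀ +
            (((e.symm i : fs) : L × L).2) + c j))}).Finite :=
        hcon fs.card hn _ _ (fun i => hfs _ (e.symm i).2)
      have hsub : {t₀ : L | ∀ i : Fin fs.card,
          ¬ IsSquare (∏ j : Fin 4, ((((e.symm i : fs) : L × L).1) * t₀ +
            (((e.symm i : fs) : L × L).2) + c j))} ⊆ ⋂ p ∈ fs, Bf p := by
        intro t ht
        simp only [Set.mem_iInter]
        intro p hp hsq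
        exact ht (e ⟨p, hp⟩) (by simpa [Equiv.symm_apply_apply] using hsq)
      exact fun hQ => hinf (hQ.subset hsub)
  -- build an ultrafilter containing all bad sets and all cofinite sets
  obtain ⟨U, hU⟩ := Ultrafilter.exists_ultrafilter_of_finite_inter_nonempty
      ((Bf '' {p : L × L | p.1 ≠ 0}) ∪ {s : Set L | sᶜ.Finite}) (by
    intro T hT
    -- split T into bad sets and cofinite sets
    set T₁ : Finset (Set L) := T.filter (fun s => ∃ p : L × L, p.1 ≠ 0 ∧ Bf p = s) with hT₁
    have hchoice : ∀ s ∈ T₁, ∃ p : L × L, p.1 ≠ 0 ∧ Bf p = s := by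
      intro s hs
      exact (Finset.mem_filter.1 hs).2
    choose! pk hpk1 hpk2 using hchoice
    have hfs0 : ∀ q ∈ T₁.image pk, q.1 ≠ 0 := by
      intro q hq
      rcases Finset.mem_image.1 hq with ⟨s, hs, rfl⟩
      exact hpk1 s hs
    have hinf : (⋂ q ∈ T₁.image pk, Bf q).Infinite := key _ hfs0
    have hBadfin : (⋃ s ∈ T.filter (fun s => s ∉ T₁), sᶜ).Finite := by
      apply Set.Finite.biUnion (Finset.finite_toSet _)
      intro s hs
      rcases Finset.mem_coe.1 hs with hs'
      have hsT := (Finset.mem_filter.1 hs').1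
      have hsn := (Finset.mem_filter.1 hs').2
      rcases hT hsT with h | h
      · exact absurd (Finset.mem_filter.2 ⟨hsT, by
          rcases h with ⟨p, hp, rfl⟩; exact ⟨p, hp, rfl⟩⟩) hsn
      · exact h
    obtain ⟨t, ht⟩ := (hinf.diff hBadfin).nonempty
    refine ⟨t, ?_⟩
    rw [Set.mem_sInter]
    intro s hsT
    rcases Finset.mem_coe.1 hsT with hsT'
    by_cases hs1 : s ∈ T₁
    · have hmem : t ∈ Bf (pk s) := by
        have := ht.1
        rw [Set.mem_iInter₂] at this
        exact this (pk s) (Finset.mem_image_of_mem pk hs1)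
      rwa [hpk2 s hs1] at hmem
    · have : t ∉ sᶜ := by
        intro habs
        exact ht.2 (Set.mem_biUnion
          (Finset.mem_coe.2 (Finset.mem_filter.2 ⟨hsT', hs1⟩)) habs)
      simpa using this)
  have memB : ∀ p : L × L, p.1 ≠ 0 → Bf p ∈ U := by
    intro p hp
    exact hU (Or.inl ⟨p, hp, rfl⟩)
  have memCof : ∀ s : Set L, sᶜ.Finite → s ∈ U := fun s h => hU (Or.inr h)
  -- the limit coloring
  haveI : Finite (Lˣ ⧸ N) := hfin
  have hν : ∀ d : L, ∃ g : Lˣ ⧸ N, (φ d) ⁻¹' {g} ∈ U := by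
    intro d
    obtain ⟨g, hg⟩ := Ultrafilter.eq_pure_of_finite (U.map (φ d))
    refine ⟨g, ?_⟩
    have : {g} ∈ U.map (φ d) := by
      rw [hg]
      exact Ultrafilter.mem_pure.2 rfl
    exact this
  choose ν hνU using hν
  -- Gallai's theorem : a monochromatic homothetic copy of the configuration c
  obtain ⟨k, hk, b₀, g₀, hmono⟩ :=
    Combinatorics.exists_mono_homothetic_copy (M := L) (Finset.univ.image c) ν
  have hα : (k : L) ≠ 0 := Nat.cast_ne_zero.2 hk.ne'
  set d : Fin 4 → L := fun j => k • (c j) + b₀ with hdd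
  have hd : ∀ j, ν (d j) = g₀ := fun j =>
    hmono (c j) (Finset.mem_image_of_mem c (Finset.mem_univ j))
  -- the relevant sets all lie in the ultrafilter
  have hW : ∀ j, {t : L | t + d j ≠ 0} ∈ U := by
    intro j
    apply memCof
    have : {t : L | t + d j ≠ 0}ᶜ ⊆ {-(d j)} := by
      intro t ht
      simp only [Set.mem_compl_iff, Set.mem_setOf_eq, not_not] at ht
      simp [Set.mem_singleton_iff, eq_neg_of_add_eq_zero_left ht]
    exact (Set.finite_singleton _).subset this
  have hV : ∀ j, (φ (d j)) ⁻¹' {g₀} ∈ U := by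
    intro j
    have := hνU (d j)
    rwa [hd j] at this
  have hBmem : Bf ((k : L)⁻¹, (k : L)⁻¹ * b₀) ∈ U :=
    memB _ (inv_ne_zero hα)
  have hbig : (Bf ((k : L)⁻¹, (k : L)⁻¹ * b₀) ∩
      ⋂ j : Fin 4, ({t : L | t + d j ≠ 0} ∩ (φ (d j)) ⁻¹' {g₀})) ∈ U := by
    apply Filter.inter_mem hBmem
    exact Filter.iInter_mem.2 fun j => Filter.inter_mem (hW j) (hV j)
  obtain ⟨t, htB, htj⟩ := Filter.nonempty_of_mem hbig
  rw [Set.mem_iInter] at htj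
  -- the four factors are all in the class g₀, whose fourth power is trivial
  have hne0 : ∀ j, t + d j ≠ 0 := fun j => (htj j).1
  let u : Fin 4 → Lˣ := fun j => Units.mk0 (t + d j) (hne0 j)
  have hclu : ∀ j, cl (u j) = g₀ := by
    intro j
    have := (htj j).2
    simp only [Set.mem_preimage, Set.mem_singleton_iff] at this
    rw [← this]
    simp only [φ, dif_neg (hne0 j)]
    rfl
  have hg2 : ∀ g : Lˣ ⧸ N, g * g = 1 := by
    intro g
    obtain ⟨v, rfl⟩ := QuotientGroup.mk'_surjective N g
    rw [← map_mul]
    rw [QuotientGroup.mk'_apply, QuotientGroup.eq_one_iff]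
    exact ⟨v, by simp [powMonoidHom_apply, sq]⟩
  have hprod1 : cl (∏ j : Fin 4, u j) = 1 := by
    rw [map_prod]
    have : ∀ j ∈ Finset.univ (α := Fin 4), cl (u j) = g₀ := fun j _ => hclu j
    rw [Finset.prod_congr rfl this, Finset.prod_const]
    have h2 : g₀ ^ 2 = 1 := by rw [pow_two]; exact hg2 g₀
    calc g₀ ^ Finset.univ.card = g₀ ^ 4 := by rw [Finset.card_univ, Fintype.card_fin]
    _ = (g₀ ^ 2) ^ 2 := by rw [← pow_mul]
    _ = 1 := by rw [h2, one_pow]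
  have hsq : IsSquare (∏ j : Fin 4, (t + d j)) := by
    rw [QuotientGroup.mk'_apply, QuotientGroup.eq_one_iff] at hprod1
    obtain ⟨w, hw⟩ := hprod1
    refine ⟨(w : L), ?_⟩
    have hval : ((∏ j : Fin 4, u j : Lˣ) : L) = ∏ j : Fin 4, ((u j : Lˣ) : L) :=
      map_prod (Units.coeHom L) u Finset.univ
    have : ∏ j : Fin 4, (t + d j) = ((∏ j : Fin 4, u j : Lˣ) : L) := by
      rw [hval]
      rfl
    rw [this, ← hw]
    simp [powMonoidHom_apply, sq]
  -- hence f((1/k) t + b₀/k) is a square : contradiction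
  apply htB
  have hfac : ∀ j : Fin 4, (k : L)⁻¹ * t + (k : L)⁻¹ * b₀ + c j
      = (k : L)⁻¹ * (t + d j) := by
    intro j
    have : d j = (k : L) * c j + b₀ := by
      rw [hdd]
      simp [nsmul_eq_mul]
    rw [this]
    field_simp
    ring
  show IsSquare (∏ j : Fin 4, ((k : L)⁻¹ * t + (k : L)⁻¹ * b₀ + c j))
  rw [Finset.prod_congr rfl (fun j _ => hfac j), Finset.prod_mul_distrib,
    Finset.prod_const]
  simp only [Finset.card_univ, Fintype.card_fin]
  exact IsSquare.mul ⟨((k : L)⁻¹) ^ 2, by ring⟩ hsq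
end

section
/- Let L be a field of characteristic zero whose absolute Galois group Gal(L̄/L) is topologically finitely generated. Then the quotient group L^×/(L^×)² is finite. -/
open Polynomial

section Aux

lemma aux_neg_ne {K : Type*} [Field K] [CharZero K] {x : K} (hx : x ≠ 0) : -x ≠ x := by
  intro h
  have h2 : (2 : K) * x = 0 := by linear_combination -h
  rcases mul_eq_zero.mp h2 with h | h
  · exact two_ne_zero h
  · exact hx h

variable {L Lbar : Type*} [Field L] [CharZero L] [Field Lbar] [Algebra L Lbar]
  [IsAlgClosure L Lbar]

/-- An element of `Lbar` fixed by all `L`-algebra automorphisms lies in `L`. -/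
lemma aux_fixed_mem_range {α : Lbar} (h : ∀ σ : Lbar ≃ₐ[L] Lbar, σ α = α) :
    α ∈ (algebraMap L Lbar).range := by
  have hint : IsIntegral L α := Algebra.IsIntegral.isIntegral α
  by_contra hne
  have hdeg : (minpoly L α).degree ≠ 1 := fun h1 =>
    hne (minpoly.mem_range_of_degree_eq_one _ _ h1)
  have hne0 : minpoly L α ≠ 0 := minpoly.ne_zero hint
  have h1 : 0 < (minpoly L α).natDegree := minpoly.natDegree_pos hint
  have hnd : (minpoly L α).natDegree ≠ 1 := by
    intro h'
    exact hdeg ((Polynomial.degree_eq_iff_natDegree_eq hne0).mpr h')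
  have h2 : 2 ≤ (minpoly L α).natDegree := by omega
  have hsep : (minpoly L α).Separable := (minpoly.irreducible hint).separable
  haveI : IsAlgClosed Lbar := IsAlgClosure.isAlgClosed L
  have hsplit : Splits ((minpoly L α).map (algebraMap L Lbar)) := IsAlgClosed.splits _
  have hcard := Polynomial.card_rootSet_eq_natDegree (K := Lbar) hsep hsplit
  have hαmem : α ∈ (minpoly L α).rootSet Lbar := by
    rw [Polynomial.mem_rootSet]
    exact ⟨hne0, minpoly.aeval _ _⟩
  have hcard' : 1 < Fintype.card ((minpoly L α).rootSet Lbar) := by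
    rw [(Fintype.card_congr (Equiv.refl _)).trans hcard]; omega
  obtain ⟨⟨β, hβ⟩, hne'⟩ := Fintype.exists_ne_of_one_lt_card hcard' (⟨α, hαmem⟩ :
    (minpoly L α).rootSet Lbar)
  have hβ0 : (Polynomial.aeval β) (minpoly L α) = 0 := (Polynomial.mem_rootSet.mp hβ).2
  obtain ⟨σ, hσ⟩ := minpoly.exists_algEquiv_of_root' (Algebra.IsAlgebraic.isAlgebraic α) hβ0
  exact hne' (Subtype.ext (hσ.symm.trans (h σ)))

end Aux

/-- Let `L` be a field of characteristic zero whose absolute Galois group `Gal(L̄/L)` is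
topologically finitely generated (with respect to the Krull topology).  Then `Lˣ/(Lˣ)²` is
finite. -/
theorem stmt17 {L Lbar : Type*} [Field L] [CharZero L]
    [Field Lbar] [Algebra L Lbar] [IsAlgClosure L Lbar]
    (hfg : ∃ S : Set (Lbar ≃ₐ[L] Lbar), S.Finite ∧
      Dense ((Subgroup.closure S : Subgroup (Lbar ≃ₐ[L] Lbar)) : Set (Lbar ≃ₐ[L] Lbar))) :
    Finite (Lˣ ⧸ (powMonoidHom 2 : Lˣ →* Lˣ).range) := by
  classical
  haveI : CharZero Lbar := charZero_of_injective_algebraMap (algebraMap L Lbar).injective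
  obtain ⟨S, hSfin, hSdense⟩ := hfg
  haveI : Finite S := hSfin
  -- choose square roots
  haveI : IsAlgClosed Lbar := IsAlgClosure.isAlgClosed L
  have hex : ∀ a : Lˣ, ∃ α : Lbar, α ≠ 0 ∧ α ^ 2 = algebraMap L Lbar a := by
    intro a
    obtain ⟨α, hα⟩ := IsAlgClosed.exists_pow_nat_eq (algebraMap L Lbar (a : L)) (n := 2) (by norm_num)
    refine ⟨α, ?_, hα⟩
    rintro rfl
    rw [zero_pow (by norm_num)] at hα
    exact a.ne_zero ((_root_.map_eq_zero _).mp hα.symm)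
  choose r hr0 hr2 using hex
  -- if all s ∈ S fix the square root of a, then a is a square
  have key : ∀ a : Lˣ, (∀ s ∈ S, s (r a) = r a) →
      a ∈ (powMonoidHom 2 : Lˣ →* Lˣ).range := by
    intro a hfix
    have hint : IsIntegral L (r a) := Algebra.IsIntegral.isIntegral _
    haveI : FiniteDimensional L (IntermediateField.adjoin L {r a}) := IntermediateField.adjoin.finiteDimensional hint
    set G := (IntermediateField.adjoin L {r a}).fixingSubgroup with hG
    have hSsub : S ⊆ (G : Set (Lbar ≃ₐ[L] Lbar)) := by
      intro s hs
      rw [SetLike.mem_coe, IntermediateField.mem_fixingSubgroup_iff]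
      intro x hx
      -- the fixed field of s contains L and r a, hence L⟮r a⟯
      let E : IntermediateField L Lbar :=
        { carrier := {y | s y = y}
          mul_mem' := fun {x y} hx hy => by
            simp only [Set.mem_setOf_eq] at *
            rw [map_mul, hx, hy]
          one_mem' := map_one s
          add_mem' := fun {x y} hx hy => by
            simp only [Set.mem_setOf_eq] at *
            rw [map_add, hx, hy]
          zero_mem' := map_zero s
          algebraMap_mem' := fun l => s.commutes l
          inv_mem' := fun y hy => by
            simp only [Set.mem_setOf_eq] at *
            rw [map_inv₀, hy] }
      have hle : IntermediateField.adjoin L {r a} ≤ E := by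
        apply IntermediateField.adjoin_le_iff.mpr
        intro y hy
        rcases hy with rfl
        exact hfix s hs
      exact hle hx
    have hclosed : IsClosed (G : Set (Lbar ≃ₐ[L] Lbar)) :=
      IntermediateField.fixingSubgroup_isClosed _
    have hsub : (Subgroup.closure S : Set (Lbar ≃ₐ[L] Lbar)) ⊆ G := by
      exact_mod_cast (Subgroup.closure_le G).mpr hSsub
    have htop : ∀ σ : Lbar ≃ₐ[L] Lbar, σ ∈ G := by
      intro σ
      have : closure ((Subgroup.closure S : Subgroup (Lbar ≃ₐ[L] Lbar)) :
          Set (Lbar ≃ₐ[L] Lbar)) ⊆ (G : Set (Lbar ≃ₐ[L] Lbar)) :=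
        hclosed.closure_subset_iff.mpr hsub
      exact this (by rw [hSdense.closure_eq]; trivial)
    -- hence r a is fixed by the whole Galois group, so lies in L
    have hfix' : ∀ σ : Lbar ≃ₐ[L] Lbar, σ (r a) = r a := by
      intro σ
      exact (htop σ) ⟨r a, IntermediateField.mem_adjoin_simple_self L (r a)⟩
    obtain ⟨c, hc⟩ := aux_fixed_mem_range hfix'
    have hcne : c ≠ 0 := by
      rintro rfl
      rw [map_zero] at hc
      exact hr0 a hc.symm
    refine ⟨Units.mk0 c hcne, ?_⟩
    ext
    have : algebraMap L Lbar (c ^ 2) = algebraMap L Lbar (a : L) := by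
      rw [map_pow, hc, hr2]
    have := (algebraMap L Lbar).injective this
    simpa [powMonoidHom] using this
  -- injective map from the quotient to S → Bool
  set Q := Lˣ ⧸ (powMonoidHom 2 : Lˣ →* Lˣ).range with hQ
  have hwd : ∀ a b : Lˣ, (QuotientGroup.mk a : Q) = QuotientGroup.mk b →
      ∀ s : Lbar ≃ₐ[L] Lbar, (s (r a) = r a ↔ s (r b) = r b) := by
    intro a b hab s
    rw [QuotientGroup.eq] at hab
    obtain ⟨c, hc⟩ := hab
    -- a⁻¹ * b = c ^ 2
    have hc' : (b : L) = (a : L) * (c : L) ^ 2 := by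
      have : (a⁻¹ * b : Lˣ) = c ^ 2 := hc.symm
      have := congrArg (Units.val) this
      push_cast at this
      field_simp at this ⊢
      rw [mul_comm] at this
      exact_mod_cast this.trans (mul_comm _ _)
    -- s (r b) / r b = s (r a) / r a since r b = ± r a * c
    have h2 : (r b) ^ 2 = (r a * algebraMap L Lbar c) ^ 2 := by
      rw [mul_pow, hr2, hr2, ← map_pow, ← map_mul, hc']
    have hpm : r b = r a * algebraMap L Lbar c ∨ r b = -(r a * algebraMap L Lbar c) := by
      have := sq_eq_sq_iff_eq_or_eq_neg.mp h2
      exact this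
    have hcne : algebraMap L Lbar (c : L) ≠ 0 := by
      simp [c.ne_zero]
    rcases hpm with h | h
    · constructor
      · intro hh
        rw [h, map_mul, AlgEquiv.commutes, hh]
      · intro hh
        rw [h, map_mul, AlgEquiv.commutes] at hh
        exact mul_right_cancel₀ hcne hh
    · constructor
      · intro hh
        rw [h, map_neg, map_mul, AlgEquiv.commutes, hh]
      · intro hh
        rw [h, map_neg, map_mul, AlgEquiv.commutes] at hh
        exact mul_right_cancel₀ hcne (neg_injective hh)
  let f : Q → (S → Bool) := fun q =>
    Quotient.liftOn' q (fun a s => decide ((s : Lbar ≃ₐ[L] Lbar) (r a) = r a))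
      (by
        intro a b hab
        funext s
        have : (QuotientGroup.mk a : Q) = QuotientGroup.mk b := Quotient.sound' hab
        simp only [decide_eq_decide]
        exact hwd a b this s)
  have hfinj : Function.Injective f := by
    intro q₁ q₂ hf
    obtain ⟨a, rfl⟩ := QuotientGroup.mk_surjective q₁
    obtain ⟨b, rfl⟩ := QuotientGroup.mk_surjective q₂
    have hiff : ∀ s ∈ S, (s (r a) = r a ↔ s (r b) = r b) := by
      intro s hs
      have := congrFun hf ⟨s, hs⟩
      simpa [f, decide_eq_decide] using this
    -- show a * b⁻¹ is a square
    rw [QuotientGroup.eq]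
    apply key
    intro s hs
    -- r (a⁻¹ * b) = ± r a⁻¹... instead relate via squares:
    have h2 : (r (a⁻¹ * b) * r a) ^ 2 = (r b) ^ 2 := by
      rw [mul_pow, hr2, hr2, hr2, ← map_mul]
      push_cast
      field_simp
    have hpm : r (a⁻¹ * b) * r a = r b ∨ r (a⁻¹ * b) * r a = -(r b) :=
      sq_eq_sq_iff_eq_or_eq_neg.mp h2
    -- χ values: s x / x ∈ {1, -1}; use that s (r a) = ± r a etc.
    have hsign : ∀ u : Lˣ, s (r u) = r u ∨ s (r u) = -(r u) := by
      intro u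
      have : (s (r u)) ^ 2 = (r u) ^ 2 := by
        rw [← map_pow, hr2]
        exact s.commutes _
      exact sq_eq_sq_iff_eq_or_eq_neg.mp this
    rcases hsign (a⁻¹ * b) with h | h
    · exact h
    · exfalso
      -- then s flips r a and r b oppositely, contradicting hiff
      have hra : s (r a) = r a ↔ s (r b) = r b := hiff s hs
      have hrane : r a ≠ 0 := hr0 a
      have hrbne : r b ≠ 0 := hr0 b
      have hrxne : r (a⁻¹ * b) ≠ 0 := hr0 _
      rcases hpm with hpm | hpm
      · -- r x * r a = r b
        rcases hsign a with ha | ha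
        · have hb : s (r b) = r b := hra.mp ha
          rw [← hpm, map_mul, h, ha, neg_mul] at hb
          have : -(r (a⁻¹ * b) * r a) = r (a⁻¹ * b) * r a := by rw [hb, hpm]
          have hne : r (a⁻¹ * b) * r a ≠ 0 := mul_ne_zero hrxne hrane
          exact aux_neg_ne hne this
        · have hb : s (r b) ≠ r b := fun hb => by
            have ha' := hra.mpr hb
            rw [ha'] at ha
            exact aux_neg_ne hrane ha.symm
          apply hb
          rw [← hpm, map_mul, h, ha, neg_mul, mul_neg, neg_neg]
      · -- r x * r a = - r b
        rcases hsign a with ha | ha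
        · have hb : s (r b) = r b := hra.mp ha
          have : s (r (a⁻¹ * b) * r a) = r (a⁻¹ * b) * r a := by
            rw [hpm, map_neg, hb]
          rw [map_mul, h, ha, neg_mul] at this
          have hne : r (a⁻¹ * b) * r a ≠ 0 := mul_ne_zero hrxne hrane
          exact aux_neg_ne hne this
        · have hb : s (r b) ≠ r b := fun hb => by
            have ha' := hra.mpr hb
            rw [ha'] at ha
            exact aux_neg_ne hrane ha.symm
          apply hb
          have hrb : r b = -(r (a⁻¹ * b) * r a) := by linear_combination hpm
          rw [hrb, map_neg, map_mul, h, ha]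
          ring
  exact Finite.of_injective f hfinj
end

section
/- For all positive integers h and r there exists a positive integer N such that: every finite group H of order greater than N that is isomorphic to a subquotient of a finite direct product H₁ × ⋯ × Hₙ of finite groups each of order at most h contains a subgroup isomorphic to the elementary abelian group (ℤ/pℤ)^r for some prime p. -/
set_option maxHeartbeats 1000000

theorem aux_embed (p r : ℕ) (hp : p.Prime) (G : Type) [CommGroup G] [Finite G]
    (hexp : ∀ x : G, x ^ p = 1) (hcard : p ^ r ≤ Nat.card G) :
    ∃ φ : Multiplicative (Fin r → ZMod p) →* G, Function.Injective φ := by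
  haveI : Fact p.Prime := ⟨hp⟩
  haveI : NeZero p := ⟨hp.ne_zero⟩
  haveI : Module (ZMod p) (Additive G) := AddCommGroup.zmodModule (by
    intro x
    show p • x = 0
    rw [← toMul_eq_one, toMul_nsmul]
    exact hexp _)
  haveI : Fintype (Additive G) := Fintype.ofFinite _
  have hcard2 : Fintype.card (Additive G) = (Fintype.card (ZMod p)) ^
      Module.finrank (ZMod p) (Additive G) := Module.card_eq_pow_finrank
  have hr : r ≤ Module.finrank (ZMod p) (Additive G) := by
    rw [ZMod.card] at hcard2
    have h3 : Nat.card G = p ^ Module.finrank (ZMod p) (Additive G) := by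
      calc Nat.card G = Nat.card (Additive G) := rfl
        _ = Fintype.card (Additive G) := Nat.card_eq_fintype_card
        _ = _ := hcard2
    rw [h3] at hcard
    exact (Nat.pow_le_pow_iff_right hp.one_lt).mp hcard
  haveI : Module.Finite (ZMod p) (Additive G) := Module.Finite.of_finite
  set d := Module.finrank (ZMod p) (Additive G) with hd
  let b : Module.Basis (Fin d) (ZMod p) (Additive G) := Module.finBasis (ZMod p) (Additive G)
  let f : Fin r ↪ Fin d := (Fin.castLEEmb hr)
  have li : LinearIndependent (ZMod p) (⇑b ∘ ⇑f) := b.linearIndependent.comp f f.injective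
  let L : (Fin r → ZMod p) →ₗ[ZMod p] Additive G :=
    Fintype.linearCombination (ZMod p) (fun i => b (f i))
  have hL : Function.Injective L := by
    intro x y hxy
    have hsum : ∀ g : Fin r → ZMod p, L g = ∑ i, g i • (⇑b ∘ ⇑f) i := by
      intro g
      simp [L, Fintype.linearCombination, Function.comp]
    have h0 : L (x - y) = 0 := by rw [map_sub, hxy, sub_self]
    rw [hsum] at h0
    have h1 := Fintype.linearIndependent_iff.mp li (x - y) h0
    funext i
    have h2 := h1 i
    simpa [sub_eq_zero] using h2
  refine ⟨AddMonoidHom.toMultiplicativeLeft L.toAddMonoidHom, ?_⟩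
  intro x y hxy
  apply hL
  exact hxy

/-- The subgroup of `p`-th roots of one in a commutative group. -/
def omegaSub (G : Type) [CommGroup G] (p : ℕ) : Subgroup G where
  carrier := {x | x ^ p = 1}
  one_mem' := by simp
  mul_mem' := by
    intro x y hx hy
    simp only [Set.mem_setOf_eq] at *
    rw [mul_pow, hx, hy, mul_one]
  inv_mem' := by
    intro x hx
    simp only [Set.mem_setOf_eq] at *
    rw [inv_pow, hx, inv_one]

theorem mem_omegaSub {G : Type} [CommGroup G] {p : ℕ} {x : G} :
    x ∈ omegaSub G p ↔ x ^ p = 1 := Iff.rfl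

theorem aux_card_le (p : ℕ) : ∀ (a : ℕ) (G : Type) [CommGroup G] [Finite G],
    (∀ x : G, x ^ p ^ a = 1) → Nat.card G ≤ Nat.card (omegaSub G p) ^ a := by
  intro a
  induction a with
  | zero =>
    intro G _ _ hexp
    have h1 : ∀ x : G, x = 1 := fun x => by simpa using hexp x
    have : Nat.card G = 1 := Nat.card_eq_one_iff_unique.mpr
      ⟨⟨fun x y => by rw [h1 x, h1 y]⟩, ⟨1⟩⟩
    simp [this]
  | succ a ih =>
    intro G _ _ hexp
    set φ : G →* G := powMonoidHom p with hφ
    have hker : φ.ker = omegaSub G p := by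
      ext x
      simp [MonoidHom.mem_ker, hφ, powMonoidHom_apply, mem_omegaSub]
    have hexpR : ∀ y : φ.range, y ^ p ^ a = 1 := by
      rintro ⟨y, x, rfl⟩
      apply Subtype.ext
      push_cast
      rw [powMonoidHom_apply, ← pow_mul, ← pow_succ']
      exact hexp x
    have hR := ih φ.range hexpR
    -- Ω of the range injects into Ω of G
    have hinj : Nat.card (omegaSub (φ.range) p) ≤ Nat.card (omegaSub G p) := by
      apply Nat.card_le_card_of_injective
        (f := fun x : omegaSub (φ.range) p =>
          (⟨(x : φ.range), by
            have hx := x.2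
            rw [mem_omegaSub] at hx ⊢
            have := congrArg (Subtype.val) hx
            push_cast at this
            exact this⟩ : omegaSub G p))
      intro x y hxy
      rw [Subtype.ext_iff] at hxy
      exact Subtype.ext (Subtype.ext hxy)
    have hcard : Nat.card G = Nat.card (G ⧸ φ.ker) * Nat.card φ.ker :=
      (Subgroup.card_eq_card_quotient_mul_card_subgroup φ.ker)
    have hquot : Nat.card (G ⧸ φ.ker) = Nat.card φ.range :=
      Nat.card_congr (QuotientGroup.quotientKerEquivRange φ).toEquiv
    calc Nat.card G = Nat.card φ.range * Nat.card φ.ker := by rw [hcard, hquot]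
      _ ≤ (Nat.card (omegaSub (φ.range) p) ^ a) * Nat.card (omegaSub G p) := by
          apply Nat.mul_le_mul hR
          rw [hker]
      _ ≤ (Nat.card (omegaSub G p) ^ a) * Nat.card (omegaSub G p) :=
          Nat.mul_le_mul_right _ (Nat.pow_le_pow_left hinj a)
      _ = Nat.card (omegaSub G p) ^ (a + 1) := by rw [pow_succ]

theorem aux_pgroup_abelian (p : ℕ) (hp : p.Prime) (G : Type) [Group G] [Finite G]
    (hG : IsPGroup p G) (s : ℕ)
    (hab : ∀ A : Subgroup G, (∀ x ∈ A, ∀ y ∈ A, x * y = y * x) → Nat.card A ≤ s) :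
    Nat.card G ≤ s * s.factorial := by
  classical
  haveI : Fact p.Prime := ⟨hp⟩
  haveI : Finite (Subgroup G) :=
    Finite.of_injective (fun A => (A : Set G)) SetLike.coe_injective
  -- a normal abelian subgroup of maximal cardinality
  haveI : Nonempty {A : Subgroup G // A.Normal ∧ ∀ x ∈ A, ∀ y ∈ A, x * y = y * x} :=
    ⟨⟨⊥, inferInstance, by
      intro x hx y hy
      rw [Subgroup.mem_bot] at hx hy
      rw [hx, hy]⟩⟩
  obtain ⟨⟨A, hAnorm, hAcomm⟩, hmax⟩ :=
    Finite.exists_max (fun A : {A : Subgroup G // A.Normal ∧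
      ∀ x ∈ A, ∀ y ∈ A, x * y = y * x} => Nat.card A.1)
  haveI : A.Normal := hAnorm
  -- the centralizer of A is contained in A
  have hcent : Subgroup.centralizer (A : Set G) ≤ A := by
    set N := Subgroup.centralizer (A : Set G) with hNdef
    have hAN : A ≤ N := by
      intro a ha
      rw [Subgroup.mem_centralizer_iff]
      intro b hb
      exact hAcomm b hb a ha
    have hNnorm : N.Normal := by
      constructor
      intro n hn g
      rw [hNdef, Subgroup.mem_centralizer_iff]
      intro a ha
      have ha' : g⁻¹ * a * g ∈ A := by
        have := hAnorm.conj_mem a ha g⁻¹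
        simpa using this
      have h2 : g * ((g⁻¹ * a * g) * n) * g⁻¹ = g * (n * (g⁻¹ * a * g)) * g⁻¹ := by
        rw [hn _ ha']
      calc a * (g * n * g⁻¹) = g * ((g⁻¹ * a * g) * n) * g⁻¹ := by group
        _ = g * (n * (g⁻¹ * a * g)) * g⁻¹ := h2
        _ = (g * n * g⁻¹) * a := by group
    by_contra hc
    obtain ⟨x0, hx0N, hx0A⟩ := SetLike.not_le_iff_exists.mp hc
    -- pass to the quotient Q = G / A
    set Q := G ⧸ A with hQdef
    have hQ : IsPGroup p Q := hG.to_quotient A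
    set π := QuotientGroup.mk' A with hπdef
    set N' : Subgroup Q := N.map π with hN'def
    haveI : N'.Normal := hNnorm.map π (QuotientGroup.mk'_surjective A)
    have hx0Q : π x0 ∈ N' := Subgroup.mem_map_of_mem π hx0N
    have hx0ne : π x0 ≠ 1 := by
      rw [hπdef, Ne, QuotientGroup.mk'_apply, QuotientGroup.eq_one_iff]
      exact hx0A
    haveI : Nontrivial N' := ⟨⟨⟨π x0, hx0Q⟩, 1, by
      intro hcon
      exact hx0ne (congrArg Subtype.val hcon)⟩⟩
    have hdvd : p ∣ Nat.card N' := by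
      obtain ⟨k, hk0, hk⟩ := (hQ.to_subgroup N').nontrivial_iff_card.mp inferInstance
      rw [hk]
      exact dvd_pow_self p hk0.ne'
    have hQ' : IsPGroup p (ConjAct Q) := hQ.of_equiv ConjAct.toConjAct
    have h1fix : (1 : N') ∈ MulAction.fixedPoints (ConjAct Q) N' := by
      intro g
      simp
    obtain ⟨z, hzfix, hz1⟩ :=
      hQ'.exists_fixed_point_of_prime_dvd_card_of_fixed_point N' hdvd h1fix
    -- z is a nontrivial element of N' centralized by all of Q
    have hzcen : ∀ q : Q, q * (z : Q) * q⁻¹ = (z : Q) := by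
      intro q
      have := hzfix (ConjAct.toConjAct q)
      have h2 : ((ConjAct.toConjAct q • z : N') : Q) = (z : Q) := congrArg Subtype.val this
      rwa [ConjAct.Subgroup.val_conj_smul, ConjAct.smul_def, ConjAct.ofConjAct_toConjAct] at h2
    obtain ⟨x, hxN, hxπ⟩ := z.2
    have hxcent : ∀ u ∈ A, u * x = x * u := Subgroup.mem_centralizer_iff.mp hxN
    have hxA : x ∉ A := by
      intro hxA
      apply hz1
      apply Subtype.ext
      show (1 : Q) = (z : Q)
      rw [← hxπ, hπdef, QuotientGroup.mk'_apply]
      exact ((QuotientGroup.eq_one_iff x).mpr hxA).symm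
    -- the subgroup generated by A and x
    set S : Set G := (A : Set G) ∪ {x} with hSdef
    set B : Subgroup G := Subgroup.closure S with hBdef
    have hAB : A ≤ B := by
      have : (A : Set G) ⊆ S := Set.subset_union_left
      exact fun a ha => Subgroup.subset_closure (this ha)
    have hxB : x ∈ B := Subgroup.subset_closure (Set.mem_union_right _ rfl)
    -- commuting generators
    have hScomm : ∀ u ∈ S, ∀ v ∈ S, u * v = v * u := by
      rintro u (hu | hu) v (hv | hv)
      · exact hAcomm u hu v hv
      · rw [Set.mem_singleton_iff] at hv; subst hv
        exact hxcent u hu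
      · rw [Set.mem_singleton_iff] at hu; subst hu
        exact (hxcent v hv).symm
      · rw [Set.mem_singleton_iff] at hu hv; subst hu; subst hv; rfl
    -- B is abelian
    have hBcomm : ∀ u ∈ B, ∀ v ∈ B, u * v = v * u := by
      intro u hu v hv
      refine Subgroup.closure_induction₂
        (p := fun a b _ _ => a * b = b * a) (fun u v hu hv => hScomm u hu v hv) ?_ ?_ ?_ ?_ ?_ ?_ hu hv
      · intro a _; rw [one_mul, mul_one]
      · intro a _; rw [one_mul, mul_one]
      · intro a b c _ _ _ h1 h2
        rw [mul_assoc, h2, ← mul_assoc, h1, mul_assoc]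
      · intro a b c _ _ _ h1 h2
        rw [← mul_assoc, h1, mul_assoc, h2, ← mul_assoc]
      · intro a b _ _ h1
        have hc2 : Commute a b := h1
        exact hc2.inv_left.eq
      · intro a b _ _ h1
        have hc2 : Commute a b := h1
        exact hc2.inv_right.eq
    -- B is normal
    have hxconj : ∀ g : G, g * x * g⁻¹ ∈ B := by
      intro g
      have h1 : π (g * x * g⁻¹) = π x := by
        have := hzcen (π g)
        rw [← hxπ] at this
        rw [hπdef] at this ⊢
        rw [map_mul, map_mul, map_inv]; exact this
      have h2 : (g * x * g⁻¹) * x⁻¹ ∈ A := by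
        have : π ((g * x * g⁻¹) * x⁻¹) = 1 := by
          rw [map_mul, h1, map_inv, mul_inv_cancel]
        rwa [hπdef, QuotientGroup.mk'_apply, QuotientGroup.eq_one_iff] at this
      have : (g * x * g⁻¹) = ((g * x * g⁻¹) * x⁻¹) * x := by group
      rw [this]
      exact Subgroup.mul_mem _ (hAB h2) hxB
    have hBnorm : B.Normal := by
      constructor
      intro n hn g
      have hmap : B.map (MulAut.conj g).toMonoidHom ≤ B := by
        rw [hBdef, MonoidHom.map_closure]
        apply Subgroup.closure_le _ |>.mpr
        rintro y ⟨u, hu, rfl⟩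
        rcases hu with hu | hu
        · exact hAB (by simpa using hAnorm.conj_mem u hu g)
        · rw [Set.mem_singleton_iff] at hu; subst hu
          simpa using hxconj g
      have : (MulAut.conj g).toMonoidHom n ∈ B.map (MulAut.conj g).toMonoidHom :=
        Subgroup.mem_map_of_mem _ hn
      have h2 := hmap this
      simpa using h2
    -- contradiction with maximality
    have hBA : Nat.card B ≤ Nat.card A := hmax ⟨B, hBnorm, hBcomm⟩
    have : A = B := Subgroup.eq_of_le_of_card_ge hAB hBA
    rw [this] at hxA
    exact hxA hxB
  -- now the counting argument
  set f : G →* MulAut A := MulAut.conjNormal with hfdef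
  have hker : f.ker ≤ A := by
    intro g hg
    apply hcent
    rw [Subgroup.mem_centralizer_iff]
    intro a ha
    have h1 : f g = 1 := hg
    have h2 : ((f g ⟨a, ha⟩ : A) : G) = a := by rw [h1]; rfl
    rw [hfdef, MulAut.conjNormal_apply] at h2
    have h2' : g * a * g⁻¹ = a := h2
    calc a * g = (g * a * g⁻¹) * g := by rw [h2']
      _ = g * a := by group
  haveI : Finite (MulAut A) := inferInstance
  have hcard1 : Nat.card G = Nat.card (G ⧸ f.ker) * Nat.card f.ker :=
    Subgroup.card_eq_card_quotient_mul_card_subgroup f.ker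
  have hcard2 : Nat.card (G ⧸ f.ker) = Nat.card f.range :=
    Nat.card_congr (QuotientGroup.quotientKerEquivRange f).toEquiv
  have hcard3 : Nat.card f.range ≤ Nat.card (MulAut A) :=
    Nat.card_le_card_of_injective Subtype.val Subtype.val_injective
  have hcard4 : Nat.card (MulAut A) ≤ Nat.card (Equiv.Perm A) :=
    Nat.card_le_card_of_injective (fun e => e.toEquiv)
      (fun e₁ e₂ he => by
        ext a
        have h3 : e₁.toEquiv = e₂.toEquiv := he
        have h4 : e₁ a = e₂ a :=
          congrFun (congrArg (fun (q : Equiv ↥A ↥A) => (q : ↥A → ↥A)) h3) a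
        exact congrArg Subtype.val h4)
  have hcard5 : Nat.card (Equiv.Perm A) = (Nat.card A).factorial := by
    haveI : Fintype A := Fintype.ofFinite _
    rw [Nat.card_eq_fintype_card, Nat.card_eq_fintype_card, Fintype.card_perm]
  have hkercard : Nat.card f.ker ≤ Nat.card A :=
    Nat.card_le_card_of_injective (Subgroup.inclusion hker)
      (Subgroup.inclusion_injective hker)
  have hAcard : Nat.card A ≤ s := hab A hAcomm
  calc Nat.card G = Nat.card (G ⧸ f.ker) * Nat.card f.ker := hcard1
    _ ≤ (Nat.card A).factorial * Nat.card A := by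
        apply Nat.mul_le_mul
        · rw [hcard2]; exact le_trans hcard3 (le_trans hcard4 (le_of_eq hcard5))
        · exact hkercard
    _ ≤ s.factorial * s := Nat.mul_le_mul (Nat.factorial_le hAcard) hAcard
    _ = s * s.factorial := Nat.mul_comm _ _

theorem aux_count (h M n : ℕ) (hh : 0 < h) (hn : 0 < n)
    (hple : ∀ p : ℕ, p.Prime → p ∣ n → p ≤ h)
    (hM : ∀ p : ℕ, p.Prime → ¬ p ^ M ∣ n) : n ≤ (h ^ M) ^ h := by
  have hfact := Nat.factorization_prod_pow_eq_self hn.ne'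
  have hsub : n.primeFactors ⊆ Finset.Icc 2 h := by
    intro p hp
    have hp1 := Nat.prime_of_mem_primeFactors hp
    have hp2 := Nat.dvd_of_mem_primeFactors hp
    exact Finset.mem_Icc.mpr ⟨hp1.two_le, hple p hp1 hp2⟩
  have hcard : n.primeFactors.card ≤ h := by
    calc n.primeFactors.card ≤ (Finset.Icc 2 h).card := Finset.card_le_card hsub
      _ = h + 1 - 2 := Nat.card_Icc 2 (h)
      _ ≤ h := by omega
  have hbound : ∀ p ∈ n.primeFactors, p ^ n.factorization p ≤ h ^ M := by
    intro p hp
    have hp1 := Nat.prime_of_mem_primeFactors hp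
    have hlt : n.factorization p < M := by
      by_contra hge
      push_neg at hge
      exact hM p hp1 (dvd_trans (pow_dvd_pow p hge) (Nat.ordProj_dvd n p))
    calc p ^ n.factorization p ≤ h ^ n.factorization p :=
          Nat.pow_le_pow_left (hple p hp1 (Nat.dvd_of_mem_primeFactors hp)) _
      _ ≤ h ^ M := Nat.pow_le_pow_right hh hlt.le
  calc n = n.factorization.prod fun p k => p ^ k := hfact.symm
    _ = ∏ p ∈ n.primeFactors, p ^ n.factorization p := by
        rw [Finsupp.prod, Nat.support_factorization]
    _ ≤ ∏ _p ∈ n.primeFactors, h ^ M := Finset.prod_le_prod' hbound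
    _ = (h ^ M) ^ n.primeFactors.card := Finset.prod_const _
    _ ≤ (h ^ M) ^ h := Nat.pow_le_pow_right (Nat.one_le_pow _ _ hh) hcard

theorem aux_main (h r : ℕ) (hh : 0 < h) (hr : 0 < r) (H : Type) [Group H] [Finite H]
    (hexp : ∀ x : H, x ^ h.factorial = 1)
    (hbig : (h ^ (h ^ (h.factorial * r) * (h ^ (h.factorial * r)).factorial + 1)) ^ h
      < Nat.card H) :
    ∃ p : ℕ, p.Prime ∧ ∃ φ : Multiplicative (Fin r → ZMod p) →* H, Function.Injective φ := by
  classical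
  set a := h.factorial with ha
  set s₀ := h ^ (a * r) with hs₀
  set M := s₀ * s₀.factorial + 1 with hM
  haveI : Fintype H := Fintype.ofFinite _
  have hcardpos : 0 < Nat.card H := Nat.card_pos
  have hple : ∀ p : ℕ, p.Prime → p ∣ Nat.card H → p ≤ h := by
    intro p hp hdvd
    haveI : Fact p.Prime := ⟨hp⟩
    obtain ⟨g, hg⟩ := exists_prime_orderOf_dvd_card (G := H) p
      (by rwa [← Nat.card_eq_fintype_card])
    have h1 : orderOf g ∣ h.factorial := orderOf_dvd_of_pow_eq_one (hexp g)
    rw [hg] at h1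
    exact (Nat.Prime.dvd_factorial hp).mp h1
  -- find a prime p with p ^ M dividing the order of H
  have hexists : ∃ p : ℕ, p.Prime ∧ p ^ M ∣ Nat.card H := by
    by_contra hnone
    push_neg at hnone
    have := aux_count h M (Nat.card H) hh hcardpos hple
      (fun p hp => hnone p hp)
    omega
  obtain ⟨p, hp, hdvd⟩ := hexists
  haveI : Fact p.Prime := ⟨hp⟩
  have hpH : p ≤ h := hple p hp (dvd_trans (dvd_pow_self p (by omega)) hdvd)
  -- a subgroup of order p ^ M
  obtain ⟨K, hK⟩ := Sylow.exists_subgroup_card_pow_prime p hdvd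
  have pK : IsPGroup p K := IsPGroup.of_card hK
  set s := p ^ (a * (r - 1)) with hs
  have hss₀ : s ≤ s₀ := by
    calc s = p ^ (a * (r - 1)) := rfl
      _ ≤ h ^ (a * (r - 1)) := Nat.pow_le_pow_left hpH _
      _ ≤ h ^ (a * r) := Nat.pow_le_pow_right hh (Nat.mul_le_mul_left a (by omega))
  have hlarge : s * s.factorial < Nat.card K := by
    rw [hK]
    have h1 : s * s.factorial < M := by
      have := Nat.mul_le_mul hss₀ (Nat.factorial_le hss₀)
      omega
    have h2 : M < 2 ^ M := Nat.lt_two_pow_self (n := M)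
    have h3 : (2:ℕ) ^ M ≤ p ^ M := Nat.pow_le_pow_left hp.two_le M
    omega
  -- a large abelian subgroup of K
  have habelian : ¬ (∀ A : Subgroup K, (∀ x ∈ A, ∀ y ∈ A, x * y = y * x) →
      Nat.card A ≤ s) := by
    intro hab
    exact absurd (aux_pgroup_abelian p hp K pK s hab) (not_le.mpr hlarge)
  push_neg at habelian
  obtain ⟨A, hAcomm, hAcard⟩ := habelian
  letI : CommGroup A :=
    { (inferInstance : Group A) with
      mul_comm := fun x y => Subtype.ext (hAcomm x.1 x.2 y.1 y.2) }
  -- exponent bound in A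
  have hexpA : ∀ x : A, x ^ (p ^ a) = 1 := by
    intro x
    set y := (x : K) with hy
    haveI : Fintype K := Fintype.ofFinite _
    have h1 : orderOf y ∣ p ^ M := by
      rw [← hK, Nat.card_eq_fintype_card]
      exact orderOf_dvd_card
    obtain ⟨c, hcM, hc⟩ := (Nat.dvd_prime_pow hp).mp h1
    have h2 : y ^ h.factorial = 1 := by
      have h3 : ((y ^ h.factorial : K) : H) = 1 := by
        push_cast
        exact hexp (y : H)
      exact Subtype.ext h3
    have h4 : p ^ c ∣ a := by
      rw [← hc, ha]
      exact orderOf_dvd_of_pow_eq_one h2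
    have h5 : p ^ c ≤ a := Nat.le_of_dvd (ha ▸ h.factorial_pos) h4
    have h6 : c < p ^ c := Nat.lt_pow_self (n := c) hp.one_lt
    have h7 : c ≤ a := by omega
    have h8 : y ^ (p ^ a) = 1 := by
      apply orderOf_dvd_iff_pow_eq_one.mp
      rw [hc]
      exact pow_dvd_pow p h7
    apply Subtype.ext
    push_cast
    exact h8
  -- the p-torsion subgroup of A is large
  have hΩcard : p ^ r ≤ Nat.card (omegaSub A p) := by
    have h1 := aux_card_le p a A hexpA
    have h2 : (p ^ (r - 1)) ^ a < Nat.card (omegaSub A p) ^ a := by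
      calc (p ^ (r - 1)) ^ a = s := by rw [hs, ← pow_mul, Nat.mul_comm]
        _ < Nat.card A := hAcard
        _ ≤ Nat.card (omegaSub A p) ^ a := h1
    have h3 : p ^ (r - 1) < Nat.card (omegaSub A p) := by
      by_contra hle
      push_neg at hle
      exact absurd (Nat.pow_le_pow_left hle a) (not_le.mpr h2)
    have h4 : Nat.card (omegaSub A p) ∣ p ^ M := by
      calc Nat.card (omegaSub A p) ∣ Nat.card A := Subgroup.card_subgroup_dvd_card _
        _ ∣ Nat.card K := Subgroup.card_subgroup_dvd_card A
        _ = p ^ M := hK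
    obtain ⟨t, htM, ht⟩ := (Nat.dvd_prime_pow hp).mp h4
    rw [ht] at h3 ⊢
    have h5 : r - 1 < t := (Nat.pow_lt_pow_iff_right hp.one_lt).mp h3
    exact Nat.pow_le_pow_right hp.pos (by omega)
  have hexpΩ : ∀ x : omegaSub A p, x ^ p = 1 := by
    intro x
    apply Subtype.ext
    push_cast
    exact x.2
  obtain ⟨φ₀, hφ₀⟩ := aux_embed p r hp (omegaSub A p) hexpΩ hΩcard
  refine ⟨p, hp, K.subtype.comp ((A.subtype).comp
    (((omegaSub A p).subtype).comp φ₀)), ?_⟩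
  intro u v huv
  apply hφ₀
  apply Subtype.ext; apply Subtype.ext; apply Subtype.ext
  exact congrArg (fun q => q) huv

/-- For all positive integers `h` and `r` there exists a positive integer `N` such that every
finite group `H` of order greater than `N` that is isomorphic to a subquotient of a finite
direct product `H₁ × ⋯ × Hₙ` of finite groups of order at most `h` contains a subgroup
isomorphic to the elementary abelian group `(ℤ/pℤ)^r` for some prime `p`. -/
theorem stmt18 (h r : ℕ) (hh : 0 < h) (hr : 0 < r) :
    ∃ N : ℕ, 0 < N ∧
      ∀ (n : ℕ) (Hs : Fin n → Type) [∀ i, Group (Hs i)] [∀ i, Finite (Hs i)],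
        (∀ i, Nat.card (Hs i) ≤ h) →
        ∀ (B : Subgroup (∀ i, Hs i)) (C : Subgroup B) [C.Normal],
          ∀ (H : Type) [Group H], Nonempty (H ≃* (B ⧸ C)) → N < Nat.card H →
            ∃ p : ℕ, p.Prime ∧
              ∃ φ : Multiplicative (Fin r → ZMod p) →* H, Function.Injective φ := by
  refine ⟨(h ^ (h ^ (h.factorial * r) * (h ^ (h.factorial * r)).factorial + 1)) ^ h,
    pow_pos (pow_pos hh _) h, ?_⟩
  intro n Hs _ _ hcard B C _ H _ he hbig
  obtain ⟨e⟩ := he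
  haveI : Finite H := Finite.of_equiv _ e.symm.toEquiv
  have key : ∀ y : (∀ i, Hs i), y ^ h.factorial = 1 := by
    intro y
    funext i
    show (y i) ^ h.factorial = 1
    apply orderOf_dvd_iff_pow_eq_one.mp
    haveI : Fintype (Hs i) := Fintype.ofFinite _
    calc orderOf (y i) ∣ Nat.card (Hs i) := by
          rw [Nat.card_eq_fintype_card]; exact orderOf_dvd_card
      _ ∣ h.factorial := Nat.dvd_factorial Nat.card_pos (hcard i)
  have keyQ : ∀ q : B ⧸ C, q ^ h.factorial = 1 := by
    intro q
    induction q using QuotientGroup.induction_on with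
    | H b =>
      have h1 : b ^ h.factorial = 1 := Subtype.ext (key (b : ∀ i, Hs i))
      calc ((b : B ⧸ C)) ^ h.factorial
          = ((QuotientGroup.mk' C) b) ^ h.factorial := rfl
        _ = (QuotientGroup.mk' C) (b ^ h.factorial) := (map_pow _ _ _).symm
        _ = 1 := by rw [h1, map_one]
  have hexp : ∀ x : H, x ^ h.factorial = 1 := by
    intro x
    apply e.injective
    rw [map_pow, map_one]
    exact keyQ (e x)
  exact aux_main h r hh hr H hexp hbig
end

section
/- Let S be an integral domain of characteristic zero that is finitely generated as a ℤ-algebra. Then there exist infinitely many primes p such that there is a surjective ring homomorphism from S onto the finite field 𝔽_p. -/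
open Polynomial Filter

section Aux

universe u

/-- Lift a ring hom through an injective ring hom whose range contains the image. -/
private lemma aux_lift {S A L : Type*} [CommRing S] [CommRing A] [CommRing L]
    (f : A →+* L) (hf : Function.Injective f) (g : S →+* L)
    (h : ∀ s, g s ∈ f.range) : ∃ χ : S →+* A, f.comp χ = g := by
  choose c hc using h
  refine ⟨{ toFun := c, map_one' := ?_, map_mul' := ?_, map_zero' := ?_, map_add' := ?_ }, ?_⟩
  · apply hf; rw [hc, map_one, map_one]
  · intro x y; apply hf; rw [hc, map_mul, map_mul, hc, hc]
  · apply hf; rw [hc, map_zero, map_zero]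
  · intro x y; apply hf; rw [hc, map_add, map_add, hc, hc]
  · ext s; exact hc s

/-- A nonconstant monic integer polynomial has a root modulo infinitely many primes `p`,
even avoiding the divisors of a fixed nonzero integer `N`. -/
private lemma aux_roots_infinite (g : ℤ[X]) (hd : 0 < g.degree) (hlc : g.Monic) (N : ℤ)
    (hN : N ≠ 0) :
    {p : ℕ | p.Prime ∧ ¬((p : ℤ) ∣ N) ∧
      ∃ r : ZMod p, Polynomial.eval₂ (Int.castRingHom (ZMod p)) r g = 0}.Infinite := by
  apply Set.infinite_of_forall_exists_gt
  intro n
  set c : ℤ := g.coeff 0 with hc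
  by_cases hc0 : c = 0
  · -- 0 is a root mod every prime
    obtain ⟨p, hpn, hp⟩ := Nat.exists_infinite_primes (max (n + 1) (N.natAbs + 1))
    refine ⟨p, ⟨hp, ?_, 0, ?_⟩, lt_of_lt_of_le (by simp) (le_trans (le_max_left _ _) hpn)⟩
    · intro hdvd
      have h1 : p ∣ N.natAbs := by simpa using Int.natAbs_dvd_natAbs.mpr hdvd
      have h2 : 0 < N.natAbs := Int.natAbs_pos.mpr hN
      have := Nat.le_of_dvd h2 h1
      omega
    · have h := eval₂_at_apply (Int.castRingHom (ZMod p)) 0 (p := g)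
      simpa [coeff_zero_eq_eval_zero, ← hc, hc0] using h
  · -- main case
    set M0 : ℤ := N * (n.factorial : ℤ) with hM0
    have hM0ne : M0 ≠ 0 := mul_ne_zero hN (by exact_mod_cast n.factorial_ne_zero)
    have hz : Tendsto (fun k : ℕ => |((c * M0 * (k : ℤ) : ℤ) : ℚ)|) atTop atTop := by
      have h0 : (0 : ℚ) < |(c * M0 : ℚ)| := abs_pos.mpr (by exact_mod_cast mul_ne_zero hc0 hM0ne)
      have : Tendsto (fun k : ℕ => |(c * M0 : ℚ)| * k) atTop atTop :=
        tendsto_natCast_atTop_atTop.const_mul_atTop h0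
      refine this.congr fun k => ?_
      push_cast
      conv_rhs => rw [abs_mul]
      rw [Nat.abs_cast]
    have htt : Tendsto (fun k : ℕ => |(↑(g.eval (c * M0 * (k : ℤ))) : ℚ)|) atTop atTop := by
      have := tendsto_abv_eval₂_atTop (Int.castRingHom ℚ) abs g hd
        (by simp [hlc.leadingCoeff]) (l := atTop) (z := fun k : ℕ => ((c * M0 * (k : ℤ) : ℤ) : ℚ))
        (by exact hz)
      refine this.congr fun k => ?_
      have : ((c * M0 * (k : ℤ) : ℤ) : ℚ) = (Int.castRingHom ℚ) (c * M0 * (k : ℤ)) := rfl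
      simp only [this, eval₂_at_apply]
      rfl
    obtain ⟨k, hk1, hk2⟩ : ∃ k : ℕ, 1 ≤ k ∧ |(↑(g.eval (c * M0 * (k : ℤ))) : ℚ)| > |(c : ℚ)| := by
      obtain ⟨k, h1, h2⟩ := ((htt.eventually_gt_atTop |(c : ℚ)|).and (eventually_ge_atTop 1)).exists
      exact ⟨k, h2, h1⟩
    set x0 : ℤ := c * M0 * k with hx0
    set v : ℤ := g.eval x0 with hv
    have hvc : |c| < |v| := by exact_mod_cast hk2
    have hdvd : x0 ∣ v - c := by
      have := sub_dvd_eval_sub x0 0 g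
      simpa [← coeff_zero_eq_eval_zero, ← hc, ← hv] using this
    obtain ⟨w, hw⟩ : c * (M0 * k) ∣ v - c := by rwa [← mul_assoc]
    set u : ℤ := 1 + M0 * k * w with hu
    have hvu : v = c * u := by rw [hu]; linarith [hw]
    have huabs : 1 < |u| := by
      have h : |v| = |c| * |u| := by rw [hvu, abs_mul]
      nlinarith [abs_nonneg c, abs_nonneg u, abs_pos.mpr hc0]
    have huabs' : 1 < u.natAbs := by
      rw [Int.abs_eq_natAbs] at huabs; exact_mod_cast huabs
    set p : ℕ := u.natAbs.minFac with hp
    have hpp : p.Prime := Nat.minFac_prime (by omega)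
    have hpu : (p : ℤ) ∣ u := Int.dvd_natAbs.mp (Int.ofNat_dvd.mpr (Nat.minFac_dvd _))
    have hpv : (p : ℤ) ∣ v := hvu ▸ hpu.mul_left c
    have hpM0 : ¬ (p : ℤ) ∣ M0 := by
      intro hdM
      have h1 : (p : ℤ) ∣ M0 * k * w := (hdM.mul_right _).mul_right _
      have h2 : (p : ℤ) ∣ 1 := (dvd_add_right h1).mp (by rwa [hu, add_comm] at hpu)
      have := Int.eq_one_of_dvd_one (by positivity) h2
      have := hpp.one_lt
      omega
    refine ⟨p, ⟨hpp, ?_, ?_⟩, ?_⟩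
    · exact fun hdN => hpM0 (hdN.mul_right _)
    · refine ⟨((x0 : ℤ) : ZMod p), ?_⟩
      have : ((x0 : ℤ) : ZMod p) = (Int.castRingHom (ZMod p)) x0 := rfl
      rw [this, eval₂_at_apply]
      exact (ZMod.intCast_zmod_eq_zero_iff_dvd _ _).mpr hpv
    · by_contra hle
      push_neg at hle
      exact hpM0 (Dvd.dvd.mul_left (by exact_mod_cast Nat.dvd_factorial hpp.pos hle) N)

/-- A finitely generated char-zero domain over `ℤ` maps into a number field. -/
private lemma aux_numberfield {S : Type u} [CommRing S] [IsDomain S] [CharZero S]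
    (hfg : Algebra.FiniteType ℤ S) :
    ∃ (L : Type u) (_ : Field L) (_ : Algebra ℚ L) (_ : FiniteDimensional ℚ L)
      (φ : S →+* L), True := by
  classical
  obtain ⟨s, hs⟩ := hfg.out
  set K := FractionRing S
  haveI : CharZero K := charZero_of_injective_algebraMap (IsFractionRing.injective S K)
  set A : Subalgebra ℚ K := Algebra.adjoin ℚ ((algebraMap S K) '' ↑s) with hA
  haveI hAft : Algebra.FiniteType ℚ A := by
    have : A.FG := Subalgebra.fg_def.mpr ⟨_, (Set.Finite.image _ s.finite_toSet), rfl⟩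
    exact (Subalgebra.fg_iff_finiteType A).mp this
  obtain ⟨m, hm⟩ := Ideal.exists_maximal A
  haveI := hm
  set L := A ⧸ m
  letI : Field L := Ideal.Quotient.field m
  letI : Algebra ℚ L := Ideal.Quotient.algebra ℚ
  haveI : Algebra.FiniteType ℚ L :=
    Algebra.FiniteType.of_surjective (Ideal.Quotient.mkₐ ℚ m)
      (Ideal.Quotient.mkₐ_surjective ℚ m)
  haveI : Module.Finite ℚ L := finite_of_finite_type_of_isJacobsonRing ℚ L
  have hrange : ∀ x : S, algebraMap S K x ∈ A := by
    intro x
    have hx : x ∈ Algebra.adjoin ℤ (↑s : Set S) := hs ▸ Algebra.mem_top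
    induction hx using Algebra.adjoin_induction with
    | mem y hy => exact Algebra.subset_adjoin ⟨y, hy, rfl⟩
    | algebraMap r =>
        have : algebraMap S K (algebraMap ℤ S r) = algebraMap ℤ K r := by
          rw [← IsScalarTower.algebraMap_apply]
        rw [this]
        have h3 : algebraMap ℤ K r = ((r : ℤ) : K) := by
          simp [algebraMap_int_eq, eq_intCast]
        rw [h3]
        exact intCast_mem A r
    | add a b _ _ ha hb => rw [map_add]; exact add_mem ha hb
    | mul a b _ _ ha hb => rw [map_mul]; exact mul_mem ha hb
  obtain ⟨ψ, hψ⟩ := aux_lift (A.toSubring.subtype) (Subtype.val_injective) (algebraMap S K)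
    (fun x => ⟨⟨algebraMap S K x, hrange x⟩, rfl⟩)
  exact ⟨L, inferInstance, inferInstance, inferInstance, (Ideal.Quotient.mk m).comp ψ, trivial⟩

private lemma aux_main_s19 {S : Type u} [CommRing S] [IsDomain S] [CharZero S]
    (hfg : Algebra.FiniteType ℤ S) :
    ∃ (g : ℤ[X]) (N : ℤ), g.Monic ∧ 0 < g.degree ∧ N ≠ 0 ∧
      ∀ p : ℕ, p.Prime → ¬((p : ℤ) ∣ N) →
        (∃ r : ZMod p, Polynomial.eval₂ (Int.castRingHom (ZMod p)) r g = 0) →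
        Nonempty (S →+* ZMod p) := by
  classical
  obtain ⟨L, _, _, _, φ, -⟩ := aux_numberfield hfg
  haveI : CharZero L := charZero_of_injective_algebraMap (algebraMap ℚ L).injective
  -- primitive element, made integral over ℤ
  obtain ⟨θ₀, hθ₀⟩ := Field.exists_primitive_element ℚ L
  have hint0 : IsIntegral ℚ θ₀ := IsIntegral.of_finite ℚ θ₀
  have halg : IsAlgebraic ℤ θ₀ := (IsFractionRing.isAlgebraic_iff ℤ ℚ L).mpr hint0.isAlgebraic
  obtain ⟨y, hy, hxy⟩ := halg.exists_integral_multiple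
  set θ : L := algebraMap ℤ L y * θ₀ with hθdef
  have hint : IsIntegral ℤ θ := by rw [hθdef, ← Algebra.smul_def]; exact hxy
  have hyL : (algebraMap ℤ L y) ≠ 0 := by
    simpa [algebraMap_int_eq, eq_intCast] using (Int.cast_ne_zero (α := L)).mpr hy
  -- adjoin ℚ {θ} = ⊤
  have hadj : Algebra.adjoin ℚ ({θ} : Set L) = ⊤ := by
    have h1 : Algebra.adjoin ℚ ({θ₀} : Set L) = ⊤ := by
      rw [← IntermediateField.adjoin_simple_toSubalgebra_of_isAlgebraic hint0.isAlgebraic, hθ₀]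
      rfl
    have hyQ : ((y : ℚ)) ≠ 0 := by exact_mod_cast hy
    have hcast : (algebraMap ℤ L y) = algebraMap ℚ L (y : ℚ) := by
      simp [algebraMap_int_eq, eq_intCast]
    have hθ₀eq : θ₀ = algebraMap ℚ L ((y : ℚ))⁻¹ * θ := by
      rw [hθdef, hcast, map_inv₀, ← mul_assoc,
        inv_mul_cancel₀ (by simpa [hcast] using hyL), one_mul]
    have hmem : θ₀ ∈ Algebra.adjoin ℚ ({θ} : Set L) := by
      rw [hθ₀eq]
      exact mul_mem (Subalgebra.algebraMap_mem _ _) (Algebra.subset_adjoin rfl)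
    rw [eq_top_iff, ← h1]
    exact Algebra.adjoin_le (Set.singleton_subset_iff.mpr hmem)
  -- minimal polynomial of θ over ℤ
  set g : ℤ[X] := minpoly ℤ θ with hg
  have hmonic : g.Monic := minpoly.monic hint
  have hdeg : 0 < g.degree := minpoly.degree_pos hint
  -- the evaluation map from AdjoinRoot g to L
  set ε : AdjoinRoot g →+* L :=
    ((Algebra.adjoin ℤ ({θ} : Set L)).val.comp (AdjoinRoot.Minpoly.toAdjoin ℤ θ)).toRingHom
    with hε
  have hεinj : Function.Injective ε := Subtype.val_injective.comp (minpoly.ToAdjoin.injective hint)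
  have hεmk : ∀ P : ℤ[X], ε (AdjoinRoot.mk g P) = Polynomial.aeval θ P := by
    intro P
    have : ε (AdjoinRoot.mk g P)
        = ((AdjoinRoot.Minpoly.toAdjoin ℤ θ) (AdjoinRoot.mk g P) : L) := rfl
    rw [this, AdjoinRoot.Minpoly.coe_toAdjoin, AdjoinRoot.liftAlgHom_mk]
    exact aeval_subalgebra_coe P (Algebra.adjoin ℤ ({θ} : Set L))
      ⟨θ, Algebra.self_mem_adjoin_singleton ℤ θ⟩
  -- every element of L is an integer polynomial in θ divided by a nonzero integer
  have keyL : ∀ z : L, ∃ (b : ℤ) (P : ℤ[X]), b ≠ 0 ∧ (b : L) * z = Polynomial.aeval θ P := by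
    intro z
    have hz : z ∈ Algebra.adjoin ℚ ({θ} : Set L) := hadj ▸ Algebra.mem_top
    rw [Algebra.adjoin_singleton_eq_range_aeval] at hz
    obtain ⟨q, hq⟩ := hz
    obtain ⟨b, hb⟩ := IsLocalization.integerNormalization_map_to_map (nonZeroDivisors ℤ) q
    refine ⟨(b : ℤ), IsLocalization.integerNormalization (nonZeroDivisors ℤ) q,
      nonZeroDivisors.coe_ne_zero b, ?_⟩
    have h1 : Polynomial.aeval θ (IsLocalization.integerNormalization (nonZeroDivisors ℤ) q)
        = Polynomial.aeval θ ((IsLocalization.integerNormalization (nonZeroDivisors ℤ) q).map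
            (algebraMap ℤ ℚ)) := (Polynomial.aeval_map_algebraMap ℚ θ _).symm
    rw [h1, hb]
    have h2 : Polynomial.aeval θ ((b : ℤ) • q) = ((b : ℤ) : L) * Polynomial.aeval θ q := by
      rw [map_zsmul, zsmul_eq_mul]
    rw [h2]
    exact (congrArg (fun t => ((b : ℤ) : L) * t) hq).symm
  choose bf Pf hbf hPf using keyL
  obtain ⟨s, hs⟩ := hfg.out
  set N : ℤ := ∏ i ∈ s, bf (φ i) with hN
  have hNzero : N ≠ 0 := Finset.prod_ne_zero_iff.mpr fun i _ => hbf (φ i)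
  -- the localization of AdjoinRoot g away from N
  set xN : AdjoinRoot g := algebraMap ℤ (AdjoinRoot g) N with hxN
  have hεxN : ε xN = ((N : ℤ) : L) := by
    rw [hxN]
    have : (algebraMap ℤ (AdjoinRoot g)) N = ((N : ℤ) : AdjoinRoot g) := by
      simp [algebraMap_int_eq, eq_intCast]
    rw [this, map_intCast]
  have hNL : ((N : ℤ) : L) ≠ 0 := Int.cast_ne_zero.mpr hNzero
  have hεxNunit : IsUnit (ε xN) := by rw [hεxN]; exact isUnit_iff_ne_zero.mpr hNL
  set A1 := Localization.Away xN with hA1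
  set ε' : A1 →+* L := Localization.awayLift ε xN hεxNunit with hε'
  have hε'alg : ∀ a : AdjoinRoot g, ε' (algebraMap (AdjoinRoot g) A1 a) = ε a := fun a =>
    IsLocalization.Away.lift_eq xN hεxNunit a
  have hε'inj : Function.Injective ε' := by
    rw [injective_iff_map_eq_zero]
    intro z hz
    obtain ⟨nn, a, ha⟩ := IsLocalization.Away.surj (S := A1) xN z
    have h1 : ε' (z * algebraMap (AdjoinRoot g) A1 xN ^ nn) = 0 := by
      rw [map_mul, hz, zero_mul]
    rw [ha, hε'alg] at h1
    have ha0 : a = 0 := hεinj (by rw [h1, map_zero])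
    rw [ha0, map_zero] at ha
    have hu : IsUnit (algebraMap (AdjoinRoot g) A1 xN ^ nn) :=
      (IsLocalization.Away.algebraMap_isUnit (S := A1) xN).pow nn
    exact (hu.mul_left_eq_zero).mp ha
  -- N⁻¹ lies in the range of ε'
  have hinvmem : ((N : ℤ) : L)⁻¹ ∈ ε'.range := by
    refine ⟨IsLocalization.Away.invSelf (S := A1) xN, ?_⟩
    have h1 : ε' (algebraMap (AdjoinRoot g) A1 xN * IsLocalization.Away.invSelf (S := A1) xN)
        = 1 := by
      rw [IsLocalization.Away.mul_invSelf, map_one]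
    rw [map_mul, hε'alg, hεxN] at h1
    field_simp at h1 ⊢
    linear_combination h1
  -- every φ x lies in the range of ε'
  have hφmem : ∀ v : S, φ v ∈ ε'.range := by
    intro v
    have hv : v ∈ Algebra.adjoin ℤ (↑s : Set S) := hs ▸ Algebra.mem_top
    induction hv using Algebra.adjoin_induction with
    | mem i hi =>
        have hb : (bf (φ i) : L) * φ i = Polynomial.aeval θ (Pf (φ i)) := hPf (φ i)
        have hmem1 : Polynomial.aeval θ (Pf (φ i)) ∈ ε'.range := by
          refine ⟨algebraMap (AdjoinRoot g) A1 (AdjoinRoot.mk g (Pf (φ i))), ?_⟩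
          rw [hε'alg, hεmk]
        have hdvdN : bf (φ i) ∣ N := Finset.dvd_prod_of_mem (fun j => bf (φ j)) hi
        obtain ⟨D, hD⟩ := hdvdN
        have hbL : ((bf (φ i) : ℤ) : L) ≠ 0 := Int.cast_ne_zero.mpr (hbf (φ i))
        have hbinv : ((bf (φ i) : ℤ) : L)⁻¹ ∈ ε'.range := by
          have hD0 : ((D : ℤ) : L) ≠ 0 := by
            intro h0
            apply hNL
            rw [hD]
            push_cast
            rw [h0, mul_zero]
          have h2 : ((bf (φ i) : ℤ) : L)⁻¹ = ((D : ℤ) : L) * ((N : ℤ) : L)⁻¹ := by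
            rw [hD]
            push_cast
            field_simp
          rw [h2]
          exact mul_mem (⟨algebraMap (AdjoinRoot g) A1 (algebraMap ℤ _ D), by
            rw [hε'alg]
            have : (algebraMap ℤ (AdjoinRoot g)) D = ((D : ℤ) : AdjoinRoot g) := by
              simp [algebraMap_int_eq, eq_intCast]
            rw [this, map_intCast]⟩) hinvmem
        have : φ i = ((bf (φ i) : ℤ) : L)⁻¹ * (((bf (φ i) : ℤ) : L) * φ i) := by
          field_simp
        rw [this, hb]
        exact mul_mem hbinv hmem1
    | algebraMap r =>
        have h1 : φ (algebraMap ℤ S r) = ((r : ℤ) : L) := by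
          have : algebraMap ℤ S r = ((r : ℤ) : S) := by simp [algebraMap_int_eq, eq_intCast]
          rw [this, map_intCast]
        rw [h1]
        exact ⟨algebraMap (AdjoinRoot g) A1 ((r : ℤ) : AdjoinRoot g), by
          rw [hε'alg, map_intCast]⟩
    | add a b _ _ ha hb => rw [map_add]; exact add_mem ha hb
    | mul a b _ _ ha hb => rw [map_mul]; exact mul_mem ha hb
  obtain ⟨χ, hχ⟩ := aux_lift ε' hε'inj φ hφmem
  -- conclusion
  refine ⟨g, N, hmonic, hdeg, hNzero, ?_⟩
  intro p hp hpN ⟨r, hr⟩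
  haveI : Fact p.Prime := ⟨hp⟩
  set σ : AdjoinRoot g →+* ZMod p := AdjoinRoot.lift (Int.castRingHom (ZMod p)) r hr with hσ
  have hσxN : σ xN = ((N : ℤ) : ZMod p) := by
    rw [hxN]
    have : (algebraMap ℤ (AdjoinRoot g)) N = ((N : ℤ) : AdjoinRoot g) := by
      simp [algebraMap_int_eq, eq_intCast]
    rw [this, map_intCast]
  have hσunit : IsUnit (σ xN) := by
    rw [hσxN]
    refine isUnit_iff_ne_zero.mpr ?_
    intro h0
    exact hpN ((ZMod.intCast_zmod_eq_zero_iff_dvd N p).mp h0)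
  exact ⟨(Localization.awayLift σ xN hσunit).comp χ⟩

end Aux

/-- Let `S` be an integral domain of characteristic zero that is finitely generated as a
`ℤ`-algebra.  Then there exist infinitely many primes `p` such that there is a surjective
ring homomorphism from `S` onto the finite field `𝔽_p`. -/
theorem stmt19 {S : Type*} [CommRing S] [IsDomain S] [CharZero S]
    (hfg : Algebra.FiniteType ℤ S) :
    {p : ℕ | p.Prime ∧ ∃ φ : S →+* ZMod p, Function.Surjective φ}.Infinite := by
  obtain ⟨g, N, hmonic, hdeg, hN, key⟩ := aux_main_s19 hfg
  refine (aux_roots_infinite g hdeg hmonic N hN).mono ?_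
  rintro p ⟨hp, hpN, r, hr⟩
  obtain ⟨ψ⟩ := key p hp hpN ⟨r, hr⟩
  exact ⟨hp, ψ, ZMod.ringHom_surjective ψ⟩
end
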